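/- Let $X$ be a topological space covered by a family $\mathcal{C}$ of subsets with $|\mathcal{C}| \leq 2^{\aleph_0}$ such that each $C \in \mathcal{C}$ is compact Hausdorff with character at most $\kappa$ at each of its points (where $\kappa \geq \aleph_0$). Then $|X| \leq 2^{\kappa}$. -/

import Mathlib

open Cardinal Filter

universe u

namespace CardCoverAux

open Set

variable {Y : Type u} [TopologicalSpace Y] {κ : Cardinal.{u}}

section Basic

variable (b : Y → Set (Set Y))

/-- κ-tightness from character ≤ κ. -/
theorem tight_aux (hκ : ℵ₀ ≤ κ) (hbc : ∀ x, #(b x) ≤ κ) (hb : ∀ x, (nhds x).HasBasis (· ∈ b x) id)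
    {A : Set Y} {x : Y} (hx : x ∈ closure A) :
    ∃ T : Set Y, T ⊆ A ∧ #T ≤ κ ∧ x ∈ closure T := by
  have hmeet : ∀ B : b x, ((B : Set Y) ∩ A).Nonempty := by
    intro B
    exact mem_closure_iff_nhds.1 hx _ ((hb x).mem_of_mem B.2)
  choose f hf1 using hmeet
  have hf1' : ∀ B : b x, f B ∈ (B : Set Y) := fun B => (hf1 B).1
  have hf2 : ∀ B : b x, f B ∈ A := fun B => (hf1 B).2
  refine ⟨Set.range f, ?_, ?_, ?_⟩
  · rintro _ ⟨B, rfl⟩; exact hf2 B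
  · exact mk_range_le.trans (hbc x)
  · refine mem_closure_iff_nhds.2 fun N hN => ?_
    rcases (hb x).mem_iff.1 hN with ⟨B, hB, hBN⟩
    exact ⟨f ⟨B, hB⟩, hBN (hf1' ⟨B, hB⟩), ⟨⟨B, hB⟩, rfl⟩⟩

theorem two_power_aleph0 (hκ : ℵ₀ ≤ κ) : ℵ₀ ≤ (2 : Cardinal.{u}) ^ κ :=
  hκ.trans (cantor κ).le

theorem two_power_pow (hκ : ℵ₀ ≤ κ) : ((2 : Cardinal.{u}) ^ κ) ^ κ = 2 ^ κ := by
  rw [← power_mul, mul_eq_self hκ]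

/-- Cardinality of closures: if `#A ≤ 2^κ` then `#(closure A) ≤ 2^κ`. -/
theorem closure_card [T2Space Y] (hκ : ℵ₀ ≤ κ) (hbc : ∀ x, #(b x) ≤ κ)
    (hb : ∀ x, (nhds x).HasBasis (· ∈ b x) id)
    {A : Set Y} (hA : #A ≤ 2 ^ κ) : #(closure A) ≤ 2 ^ κ := by
  have h2 : ℵ₀ ≤ (2 : Cardinal.{u}) ^ κ := two_power_aleph0 hκ
  have hκ2 : κ ≤ (2 : Cardinal.{u}) ^ κ := (cantor κ).le
  have key : ∀ x : Y, x ∈ closure A → ∀ B : Set Y, B ∈ b x →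
      ∃ T : Set Y, T ⊆ A ∧ T ⊆ B ∧ #T ≤ κ ∧ x ∈ closure T := by
    intro x hx B hB
    have hBn : B ∈ nhds x := (hb x).mem_of_mem hB
    have hx' : x ∈ closure (A ∩ B) := by
      refine mem_closure_iff_nhds.2 fun N hN => ?_
      rcases mem_closure_iff_nhds.1 hx (N ∩ B) (Filter.inter_mem hN hBn) with ⟨y, ⟨hyN, hyB⟩, hyA⟩
      exact ⟨y, hyN, hyA, hyB⟩
    rcases tight_aux b hκ hbc hb hx' with ⟨T, hT1, hT2, hT3⟩
    exact ⟨T, fun t ht => (hT1 ht).1, fun t ht => (hT1 ht).2, hT2, hT3⟩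
  choose! T hTA hTB hTc hTcl using key
  set K := { S : Set Y // S ⊆ A ∧ #S ≤ κ } with hK
  have hKcard : #K ≤ 2 ^ κ := by
    refine (mk_bounded_subset_le A κ).trans ?_
    calc max #A ℵ₀ ^ κ ≤ ((2 : Cardinal.{u}) ^ κ) ^ κ := by
          exact power_le_power_right (max_le hA h2)
      _ = 2 ^ κ := two_power_pow hκ
  set Φ : closure A → { S : Set K // #S ≤ κ } := fun x =>
    ⟨Set.range (fun B : b (x : Y) =>
      (⟨T x B, hTA x x.2 B B.2, hTc x x.2 B B.2⟩ : K)), mk_range_le.trans (hbc x)⟩ with hΦ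
  have hinj : Function.Injective Φ := by
    intro x y hxy
    by_contra hne
    have hne' : (x : Y) ≠ (y : Y) := fun h => hne (Subtype.ext h)
    rcases t2_separation hne' with ⟨U, V, hU, hV, hxU, hyV, hUV⟩
    rcases (hb y).mem_iff.1 (hV.mem_nhds hyV) with ⟨B₀, hB₀, hB₀V⟩
    have hmem : (⟨T y B₀, hTA y y.2 B₀ hB₀, hTc y y.2 B₀ hB₀⟩ : K) ∈ (Φ x).1 := by
      have : (⟨T y B₀, hTA y y.2 B₀ hB₀, hTc y y.2 B₀ hB₀⟩ : K) ∈ (Φ y).1 := ⟨⟨B₀, hB₀⟩, rfl⟩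
      rwa [hxy]
    rcases hmem with ⟨B₁, hB₁⟩
    have hTeq : T x B₁ = T y B₀ := congrArg Subtype.val hB₁
    have hxcl : (x : Y) ∈ closure (T y B₀) := hTeq ▸ hTcl x x.2 B₁ B₁.2
    have hclV : closure (T y B₀) ⊆ Uᶜ := by
      refine closure_minimal ?_ (isClosed_compl_iff.2 hU)
      exact fun t ht => (hUV.subset_compl_left) (hB₀V (hTB y y.2 B₀ hB₀ ht))
    exact hclV hxcl hxU
  calc #(closure A) ≤ #{ S : Set K // #S ≤ κ } := mk_le_of_injective hinj
    _ ≤ max #K ℵ₀ ^ κ := mk_bounded_set_le K κ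
    _ ≤ ((2 : Cardinal.{u}) ^ κ) ^ κ := power_le_power_right (max_le hKcard h2)
    _ = 2 ^ κ := two_power_pow hκ

end Basic

variable (κ) (b : Y → Set (Set Y))

open Classical in
/-- A choice of a point outside a family's union, when possible. -/
noncomputable def ptFn [Nonempty Y] (V : Set (Set Y)) : Y :=
  if h : ∃ y, y ∉ ⋃₀ V then h.choose else Classical.arbitrary Y

theorem ptFn_spec [Nonempty Y] {V : Set (Set Y)} (h : ⋃₀ V ≠ Set.univ) :
    ptFn V ∉ ⋃₀ V := by
  have h' : ∃ y, y ∉ ⋃₀ V := by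
    rcases (Set.ne_univ_iff_exists_notMem _).1 h with ⟨y, hy⟩
    exact ⟨y, hy⟩
  classical
  rw [ptFn]
  rw [dif_pos h']
  exact h'.choose_spec

/-- All basis sets of points of `S`. -/
def BB (S : Set Y) : Set (Set Y) := ⋃ x ∈ S, b x

/-- One step of the closing-off construction. -/
noncomputable def stepFn [Nonempty Y] (S : Set Y) : Set Y :=
  closure S ∪ (ptFn '' { V : Set (Set Y) | V ⊆ BB b S ∧ #V ≤ κ })

theorem subset_stepFn [Nonempty Y] (S : Set Y) : S ⊆ stepFn κ b S :=
  subset_closure.trans Set.subset_union_left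

/-- The transfinite closing-off iteration, indexed by `(succ κ).ord.toType`. -/
noncomputable def famFn [Nonempty Y] : (Order.succ κ).ord.ToType → Set Y :=
  (wellFounded_lt (α := (Order.succ κ).ord.ToType)).fix
    (fun i rec => stepFn κ b (⋃ j : Set.Iio i, rec j.1 j.2))

theorem famFn_eq [Nonempty Y] (i : (Order.succ κ).ord.ToType) :
    famFn κ b i = stepFn κ b (⋃ j : Set.Iio i, famFn κ b j.1) := by
  rw [famFn, WellFounded.fix_eq]

end CardCoverAux

open CardCoverAux Set in
/-- A compact Hausdorff space with character ≤ κ at all points has at most `2 ^ κ` points. -/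
theorem card_le_of_compact_aux {Y : Type u} [TopologicalSpace Y] [CompactSpace Y] [T2Space Y]
    {κ : Cardinal.{u}} (hκ : ℵ₀ ≤ κ) (b : Y → Set (Set Y))
    (hbc : ∀ x, #(b x) ≤ κ) (hb : ∀ x, (nhds x).HasBasis (· ∈ b x) id) :
    #Y ≤ 2 ^ κ := by
  rcases isEmpty_or_nonempty Y with hY | hY
  · simp [mk_eq_zero Y]
  have h2 : ℵ₀ ≤ (2 : Cardinal.{u}) ^ κ := two_power_aleph0 hκ
  have hκ2 : κ ≤ (2 : Cardinal.{u}) ^ κ := (cantor κ).le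
  have hreg : Cardinal.IsRegular (Order.succ κ) := isRegular_succ hκ
  -- the union of the iteration
  set F : Set Y := ⋃ i : (Order.succ κ).ord.ToType, famFn κ b i with hF
  have hfamF : ∀ i : (Order.succ κ).ord.ToType, famFn κ b i ⊆ F := fun i => subset_iUnion _ i
  -- bounded subsets of F are captured at some stage
  have hbdd : ∀ T : Set Y, T ⊆ F → #T ≤ κ → ∃ i : (Order.succ κ).ord.ToType, T ⊆ ⋃ j : Set.Iio i, famFn κ b j.1 := by
    intro T hTF hTc
    have : ∀ t : T, ∃ i : (Order.succ κ).ord.ToType, (t : Y) ∈ famFn κ b i := by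
      intro t
      exact mem_iUnion.1 (hTF t.2)
    choose g hg using this
    have hbound : Set.Bounded (· < ·) (Set.range g) := by
      by_contra hcon
      have hc : IsCofinal (Set.range g) := by
        by_contra h; exact hcon (not_isCofinal_iff.1 h)
      have hle := Order.cof_le hc
      rw [Ordinal.cof_toType, hreg.cof_eq] at hle
      have : #(Set.range g) ≤ κ := mk_range_le.trans hTc
      exact absurd (hle.trans this) (not_le.2 (Order.lt_succ κ))
    rcases hbound with ⟨i, hi⟩
    refine ⟨i, fun t ht => ?_⟩
    have hlt : g ⟨t, ht⟩ < i := hi _ ⟨⟨t, ht⟩, rfl⟩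
    exact mem_iUnion.2 ⟨⟨g ⟨t, ht⟩, hlt⟩, hg ⟨t, ht⟩⟩
  -- F is closed
  have hFclosed : IsClosed F := by
    refine isClosed_of_closure_subset fun x hx => ?_
    rcases tight_aux b hκ hbc hb hx with ⟨T, hT1, hT2, hT3⟩
    rcases hbdd T hT1 hT2 with ⟨i, hisub⟩
    have : x ∈ closure (⋃ j : Set.Iio i, famFn κ b j.1) :=
      closure_mono hisub hT3
    have hx' : x ∈ famFn κ b i := by
      rw [famFn_eq]
      exact Set.subset_union_left this
    exact hfamF i hx'
  -- F is closed under picking points off small non-covering families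
  have hFpick : ∀ V : Set (Set Y), V ⊆ BB b F → #V ≤ κ → ptFn V ∈ F := by
    intro V hVF hVc
    have : ∀ v : V, ∃ x : Y, x ∈ F ∧ (v : Set Y) ∈ b x := by
      intro v
      rcases Set.mem_iUnion₂.1 (hVF v.2) with ⟨x, hx, hvx⟩
      exact ⟨x, hx, hvx⟩
    choose xf hxf1 hxf2 using this
    rcases hbdd (Set.range xf) (by rintro _ ⟨v, rfl⟩; exact hxf1 v)
      (mk_range_le.trans hVc) with ⟨i, hisub⟩
    have hVsub : V ⊆ BB b (⋃ j : Set.Iio i, famFn κ b j.1) := by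
      intro v hv
      exact Set.mem_biUnion (hisub ⟨⟨v, hv⟩, rfl⟩) (hxf2 ⟨v, hv⟩)
    have : ptFn V ∈ famFn κ b i := by
      rw [famFn_eq]
      exact Set.subset_union_right ⟨V, ⟨hVsub, hVc⟩, rfl⟩
    exact hfamF i this
  -- cardinality bounds
  have hstep : ∀ S : Set Y, #S ≤ 2 ^ κ → #(stepFn κ b S) ≤ 2 ^ κ := by
    intro S hS
    have hBB : #(BB b S) ≤ 2 ^ κ := by
      rcases isEmpty_or_nonempty S with hS0 | hS0
      · have : BB b S = ∅ := by
          simp only [BB]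
          rw [Set.biUnion_eq_iUnion]
          exact Set.iUnion_of_empty _
        simp [this]
      · refine (mk_biUnion_le b S).trans ?_
        have hsup : ⨆ x : S, #(b (x : Y)) ≤ κ := ciSup_le' fun x => hbc x
        calc #S * ⨆ x : S, #(b (x : Y)) ≤ (2 ^ κ) * κ := mul_le_mul' hS hsup
          _ ≤ (2 ^ κ) * (2 ^ κ) := mul_le_mul' le_rfl hκ2
          _ = 2 ^ κ := mul_eq_self h2
    have hpicks : #(CardCoverAux.ptFn '' { V : Set (Set Y) | V ⊆ BB b S ∧ #V ≤ κ }) ≤ 2 ^ κ := by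
      refine mk_image_le.trans ?_
      have : #({ V : Set (Set Y) | V ⊆ BB b S ∧ #V ≤ κ } : Set (Set (Set Y)))
          ≤ max #(BB b S) ℵ₀ ^ κ := mk_bounded_subset_le _ κ
      refine this.trans ?_
      calc max #(BB b S) ℵ₀ ^ κ ≤ ((2 : Cardinal.{u}) ^ κ) ^ κ :=
            power_le_power_right (max_le hBB h2)
        _ = 2 ^ κ := two_power_pow hκ
    calc #(stepFn κ b S) ≤ #(closure S) + #(CardCoverAux.ptFn ''
          { V : Set (Set Y) | V ⊆ BB b S ∧ #V ≤ κ }) := mk_union_le _ _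
      _ ≤ 2 ^ κ + 2 ^ κ := add_le_add (closure_card b hκ hbc hb hS) hpicks
      _ = 2 ^ κ := add_eq_self h2
  have hfamcard : ∀ i : (Order.succ κ).ord.ToType, #(famFn κ b i) ≤ 2 ^ κ := by
    intro i
    induction i using WellFoundedLT.induction with
    | ind i IH =>
      rw [famFn_eq]
      refine hstep _ ?_
      rcases isEmpty_or_nonempty (Set.Iio i) with h0 | h0
      · rw [Set.iUnion_of_empty]; simp
      · refine (mk_iUnion_le _).trans ?_
        have hIio : #(Set.Iio i) ≤ κ := by
          have := mk_Iio_toType_ord_lt i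
          exact Order.lt_succ_iff.1 this
        have hsup : ⨆ j : Set.Iio i, #(famFn κ b j.1) ≤ 2 ^ κ :=
          ciSup_le' fun j => IH j.1 j.2
        calc #(Set.Iio i) * ⨆ j : Set.Iio i, #(famFn κ b j.1)
            ≤ (2 ^ κ) * (2 ^ κ) := mul_le_mul' (hIio.trans hκ2) hsup
          _ = 2 ^ κ := mul_eq_self h2
  have hFcard : #F ≤ 2 ^ κ := by
    refine (mk_iUnion_le _).trans ?_
    have hWcard : #(Order.succ κ).ord.ToType ≤ 2 ^ κ := by
      rw [mk_toType, Cardinal.card_ord]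
      exact Order.succ_le_of_lt (cantor κ)
    calc #(Order.succ κ).ord.ToType * ⨆ i : (Order.succ κ).ord.ToType, #(famFn κ b i)
        ≤ (2 ^ κ) * (2 ^ κ) := mul_le_mul' hWcard (ciSup_le' hfamcard)
      _ = 2 ^ κ := mul_eq_self h2
  -- F is everything
  have hFuniv : F = Set.univ := by
    refine Set.eq_univ_of_forall fun q => ?_
    by_contra hq
    have hBex : ∀ x ∈ F, ∃ B ∈ b x, q ∉ closure B := by
      intro x hx
      have hxq : ({q}ᶜ : Set Y) ∈ nhds x := by
        refine (isOpen_compl_singleton).mem_nhds ?_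
        simp only [Set.mem_compl_iff, Set.mem_singleton_iff]
        rintro rfl; exact hq hx
      rcases (closed_nhds_basis x).mem_iff.1 hxq with ⟨N, ⟨hNn, hNcl⟩, hNq⟩
      rcases (hb x).mem_iff.1 hNn with ⟨B, hB, hBN⟩
      refine ⟨B, hB, fun hqB => ?_⟩
      exact hNq ((closure_minimal hBN hNcl) hqB) rfl
    choose! Bf hBf1 hBf2 using hBex
    have hFcomp : IsCompact F := hFclosed.isCompact
    have hcov : F ⊆ ⋃ x : F, interior (Bf (x : Y)) := by
      intro x hx
      refine mem_iUnion.2 ⟨⟨x, hx⟩, ?_⟩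
      exact mem_interior_iff_mem_nhds.2 ((hb x).mem_of_mem (hBf1 x hx))
    rcases hFcomp.elim_finite_subcover (fun x : F => interior (Bf (x : Y)))
      (fun _ => isOpen_interior) hcov with ⟨t, ht⟩
    set V : Set (Set Y) := (fun x : F => Bf (x : Y)) '' ↑t with hVdef
    have hV1 : V ⊆ BB b F := by
      rintro _ ⟨x, _, rfl⟩
      exact Set.mem_biUnion x.2 (hBf1 x.1 x.2)
    have hV2 : #V ≤ κ := by
      have : (V : Set (Set Y)).Finite := (t.finite_toSet.image _)
      exact (this.lt_aleph0).le.trans hκ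
    have hqV : q ∉ ⋃₀ V := by
      rintro ⟨_, ⟨x, _, rfl⟩, hqB⟩
      exact hBf2 x.1 x.2 (subset_closure hqB)
    have hne : ⋃₀ V ≠ Set.univ := fun h => hqV (h ▸ Set.mem_univ q)
    have hpt : ptFn V ∈ F := hFpick V hV1 hV2
    have hpt' : ptFn V ∈ ⋃₀ V := by
      rcases mem_iUnion.1 (ht hpt) with ⟨x, hx⟩
      rcases mem_iUnion.1 hx with ⟨hxt, hmem⟩
      exact ⟨Bf (x : Y), ⟨x, hxt, rfl⟩, interior_subset hmem⟩
    exact ptFn_spec hne hpt'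
  calc #Y = #(Set.univ : Set Y) := (mk_univ).symm
    _ = #F := by rw [hFuniv]
    _ ≤ 2 ^ κ := hFcard

/-- If a space `X` is covered by at most `𝔠` many compact Hausdorff subspaces, each of
character at most `κ` at each of its points (`κ` infinite), then `|X| ≤ 2 ^ κ`. -/
theorem card_le_of_cover_by_compact {X : Type u} [TopologicalSpace X]
    (κ : Cardinal.{u}) (hκ : ℵ₀ ≤ κ)
    (𝒞 : Set (Set X)) (hcard : #𝒞 ≤ Cardinal.continuum) (hcover : ⋃₀ 𝒞 = Set.univ)
    (hcompact : ∀ C ∈ 𝒞, IsCompact C)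
    (ht2 : ∀ C ∈ 𝒞, T2Space ↥C)
    (hchar : ∀ C ∈ 𝒞, ∀ x : ↥C, ∃ B : Set (Set ↥C), #B ≤ κ ∧ (nhds x).HasBasis (· ∈ B) id) :
    #X ≤ 2 ^ κ := by
  have h2 : ℵ₀ ≤ (2 : Cardinal.{u}) ^ κ := hκ.trans (cantor κ).le
  have hC : ∀ C ∈ 𝒞, #C ≤ 2 ^ κ := by
    intro C hC
    haveI : CompactSpace ↥C := isCompact_iff_compactSpace.1 (hcompact C hC)
    haveI : T2Space ↥C := ht2 C hC
    choose b hbc hb using hchar C hC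
    exact card_le_of_compact_aux hκ b hbc hb
  rcases Set.eq_empty_or_nonempty 𝒞 with h𝒞 | h𝒞
  · rw [h𝒞] at hcover
    simp only [Set.sUnion_empty] at hcover
    have : IsEmpty X := by
      rw [← Set.univ_eq_empty_iff, ← hcover]
    simp [mk_eq_zero X]
  · haveI : Nonempty ↥𝒞 := h𝒞.to_subtype
    have hcont : #𝒞 ≤ 2 ^ κ := by
      refine hcard.trans ?_
      rw [continuum]
      exact power_le_power_left two_ne_zero hκ
    calc #X = #(Set.univ : Set X) := (mk_univ).symm
      _ = #(⋃₀ 𝒞) := by rw [hcover]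
      _ ≤ #𝒞 * ⨆ C : 𝒞, #C := mk_sUnion_le 𝒞
      _ ≤ (2 ^ κ) * (2 ^ κ) := mul_le_mul' hcont (ciSup_le' fun C => hC C.1 C.2)
      _ = 2 ^ κ := mul_eq_self h2
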